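/- arXiv:2007.14483 — 2 statements merged into one kernel-verified Lean document; each statement's English description precedes it below -/
import Mathlib

section
/- In a commutative idempotent involutive residuated lattice, for every x, the interval B_x := {y | 0_x ⊑ y ⊑ 1_x} is closed under negation: if y ∈ B_x then ¬y ∈ B_x. -/
/-- A commutative idempotent involutive residuated lattice. -/
class CIdInRL (α : Type*) extends Lattice α, CommMonoid α, Zero α where
  arrow : α → α → α
  residuation : ∀ x y z : α, x * y ≤ z ↔ y ≤ arrow x z
  idem : ∀ x : α, x * x = x
  involutive : ∀ x : α, arrow (arrow x 0) 0 = x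

namespace CIdInRL
variable {α : Type*} [CIdInRL α]
/-- linear negation ¬x := x → 0 -/
def neg (x : α) : α := arrow x 0
/-- 0_x := x ∧ ¬x -/
def zx (x : α) : α := x ⊓ neg x
/-- 1_x := x ∨ ¬x -/
def ox (x : α) : α := x ⊔ neg x
/-- monoidal order x ⊑ y iff x·y = x -/
def mleq (x y : α) : Prop := x * y = x
end CIdInRL

namespace CIdInRL
variable {α : Type*} [CIdInRL α]

lemma res' (a b c : α) : a * b ≤ c ↔ b ≤ arrow a c := residuation a b c

lemma neg_neg' (a : α) : neg (neg a) = a := involutive a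

lemma mul_le_mul_left'' {a b : α} (h : a ≤ b) (c : α) : c * a ≤ c * b :=
  (res' c a (c * b)).2 (h.trans ((res' c b (c * b)).1 le_rfl))

lemma mul_le_mul'' {a b c d : α} (h1 : a ≤ b) (h2 : c ≤ d) : a * c ≤ b * d := by
  calc a * c ≤ a * d := mul_le_mul_left'' h2 a
    _ = d * a := mul_comm a d
    _ ≤ d * b := mul_le_mul_left'' h1 d
    _ = b * d := mul_comm d b

lemma inf_le_mul' (a b : α) : a ⊓ b ≤ a * b := by
  have h := idem (a ⊓ b)
  calc a ⊓ b = (a ⊓ b) * (a ⊓ b) := h.symm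
    _ ≤ a * b := mul_le_mul'' inf_le_left inf_le_right

lemma mul_neg_le_zero (a : α) : a * neg a ≤ 0 := (res' a (neg a) 0).2 le_rfl

lemma mul_zero_le (a : α) : a * (0 : α) ≤ a := by
  have h : neg a * (a * 0) ≤ 0 := by
    calc neg a * (a * 0) = (a * neg a) * 0 := by
          rw [← mul_assoc, mul_comm (neg a) a]
      _ ≤ 0 * 0 := mul_le_mul'' (mul_neg_le_zero a) le_rfl
      _ = 0 := idem 0
  have := (res' (neg a) (a * 0) 0).1 h
  rwa [show arrow (neg a) 0 = a from involutive a] at this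

lemma le_neg_iff {a b : α} : a ≤ neg b ↔ b ≤ neg a := by
  constructor
  · intro h
    exact (res' a b 0).1 (by
      calc a * b = b * a := mul_comm a b
        _ ≤ b * neg b := mul_le_mul_left'' h b
        _ ≤ 0 := mul_neg_le_zero b)
  · intro h
    exact (res' b a 0).1 (by
      calc b * a = a * b := mul_comm b a
        _ ≤ a * neg a := mul_le_mul_left'' h a
        _ ≤ 0 := mul_neg_le_zero a)

lemma neg_antitone' {a b : α} (h : a ≤ b) : neg b ≤ neg a :=
  le_neg_iff.2 (by rw [neg_neg']; exact h)

lemma neg_sup' (a b : α) : neg (a ⊔ b) = neg a ⊓ neg b := by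
  apply le_antisymm
  · exact le_inf (neg_antitone' le_sup_left) (neg_antitone' le_sup_right)
  · rw [le_neg_iff]
    exact sup_le (le_neg_iff.2 inf_le_left) (le_neg_iff.2 inf_le_right)

lemma neg_ox (x : α) : neg (ox x) = zx x := by
  unfold ox zx
  rw [neg_sup', neg_neg', inf_comm]

lemma neg_zx (x : α) : neg (zx x) = ox x := by
  rw [← neg_ox, neg_neg']

lemma zx_le_zero (x : α) : zx x ≤ (0 : α) :=
  (inf_le_mul' x (neg x)).trans (mul_neg_le_zero x)

end CIdInRL

open CIdInRL in
theorem stmt4 {α : Type*} [CIdInRL α] (x y : α)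
    (hy : mleq (zx x) y ∧ mleq y (ox x)) :
    mleq (zx x) (neg y) ∧ mleq (neg y) (ox x) := by
  obtain ⟨h1, h2⟩ := hy
  have h1' : zx x * y = zx x := h1
  have h2' : y * ox x = y := h2
  have hyy : y * neg y ≤ (0 : α) := mul_neg_le_zero y
  -- zx x * neg y ≤ 0
  have key1 : zx x * neg y ≤ (0 : α) := by
    calc zx x * neg y = zx x * (y * neg y) := by rw [← mul_assoc, h1']
      _ ≤ 0 * 0 := mul_le_mul'' (zx_le_zero x) hyy
      _ = 0 := idem 0
  -- zx x ≤ y (lattice order)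
  have h0y : zx x ≤ y := by
    have := (res' (neg y) (zx x) 0).1 (by rw [mul_comm]; exact key1)
    rwa [show arrow (neg y) 0 = y from involutive y] at this
  -- zx x ≤ neg y
  have h0ny : zx x ≤ neg y := by
    have : y * zx x ≤ (0 : α) := by rw [mul_comm, h1']; exact zx_le_zero x
    exact (res' y (zx x) 0).1 this
  -- neg y ≤ ox x
  have hny1 : neg y ≤ ox x := by
    have := neg_antitone' h0y
    rwa [neg_zx] at this
  constructor
  · -- zx x * neg y = zx x
    show zx x * neg y = zx x
    apply le_antisymm
    · calc zx x * neg y = zx x * (y * neg y) := by rw [← mul_assoc, h1']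
        _ ≤ zx x * 0 := mul_le_mul_left'' hyy (zx x)
        _ ≤ zx x := mul_zero_le (zx x)
    · have h := inf_le_mul' (zx x) (neg y)
      rwa [inf_eq_left.mpr h0ny] at h
  · -- neg y * ox x = neg y
    show neg y * ox x = neg y
    apply le_antisymm
    · have : y * (neg y * ox x) ≤ (0 : α) := by
        calc y * (neg y * ox x) = (y * ox x) * neg y := by
              rw [mul_comm (neg y) (ox x), ← mul_assoc]
          _ = y * neg y := by rw [h2']
          _ ≤ 0 := hyy
      exact (res' y (neg y * ox x) 0).1 this
    · have h := inf_le_mul' (neg y) (ox x)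
      rwa [inf_eq_left.mpr hny1] at h
end

section
/- In a commutative idempotent involutive residuated lattice, for a negative element a (a ≤ 1) and all x, y with a·x = a and a·y = a, one has (x·y) ∧ ¬a = (x ∧ ¬a)·(y ∧ ¬a). -/
namespace CIdInRLAux
open CIdInRL
variable {α : Type*} [CIdInRL α]

lemma resid {x y z : α} : x * y ≤ z ↔ y ≤ arrow x z := residuation x y z

lemma resid' {x y z : α} : x * y ≤ z ↔ x ≤ arrow y z := by
  rw [mul_comm]; exact resid

lemma mul_le_mul' {p q r s : α} (h1 : p ≤ q) (h2 : r ≤ s) : p * r ≤ q * s := by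
  have h3 : q * s ≤ q * s := le_refl _
  have h4 : p * s ≤ q * s := resid'.mpr (le_trans h1 (resid'.mp h3))
  exact le_trans (resid.mpr (le_trans h2 (resid.mp (le_refl (p * s))))) h4

lemma mul_neg_le (x : α) : x * neg x ≤ 0 := resid.mpr (le_refl _)

lemma negneg (x : α) : neg (neg x) = x := involutive x

lemma le_iff_mul_neg {x y : α} : x ≤ y ↔ x * neg y ≤ 0 := by
  constructor
  · intro h
    exact le_trans (mul_le_mul' h (le_refl _)) (mul_neg_le y)
  · intro h
    have : x ≤ neg (neg y) := resid.mp (by rw [mul_comm]; exact h)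
    rwa [negneg] at this

lemma neg_antitone {x y : α} (h : x ≤ y) : neg y ≤ neg x := by
  rw [le_iff_mul_neg, negneg, mul_comm]
  exact le_trans (mul_le_mul' h (le_refl _)) (mul_neg_le y)

lemma neg_inf (x y : α) : neg (x ⊓ y) = neg x ⊔ neg y := by
  apply le_antisymm
  · have h1 : neg (neg x ⊔ neg y) ≤ x := by
      have := neg_antitone (le_sup_left : neg x ≤ neg x ⊔ neg y)
      rwa [negneg] at this
    have h2 : neg (neg x ⊔ neg y) ≤ y := by
      have := neg_antitone (le_sup_right : neg y ≤ neg x ⊔ neg y)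
      rwa [negneg] at this
    have := neg_antitone (le_inf h1 h2)
    rwa [negneg] at this
  · exact sup_le (neg_antitone inf_le_left) (neg_antitone inf_le_right)

lemma mul_sup (x y z : α) : x * (y ⊔ z) = x * y ⊔ x * z := by
  apply le_antisymm
  · exact resid.mpr (sup_le (resid.mp le_sup_left) (resid.mp le_sup_right))
  · exact sup_le (mul_le_mul' (le_refl x) le_sup_left)
      (mul_le_mul' (le_refl x) le_sup_right)

lemma inf_le_mul (x y : α) : x ⊓ y ≤ x * y := by
  calc x ⊓ y = (x ⊓ y) * (x ⊓ y) := (idem _).symm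
  _ ≤ x * y := mul_le_mul' inf_le_left inf_le_right

/-- Key lemma: if `a ≤ 1` and `a*y = a` then `z*y ⊓ ¬a ≤ z*(y ⊓ ¬a)` for all `z`. -/
lemma lemA (a y : α) (ha : a ≤ 1) (hy : a * y = a) (z : α) :
    z * y ⊓ neg a ≤ z * (y ⊓ neg a) := by
  have hay : a ≤ y := by
    calc a = a * y := hy.symm
    _ ≤ 1 * y := mul_le_mul' ha (le_refl y)
    _ = y := one_mul y
  have hny : neg y ≤ neg a := neg_antitone hay
  -- a * ¬a ≤ y ⊓ ¬a
  have hana0 : a * neg a ≤ 0 := mul_neg_le a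
  have hana_y : a * neg a ≤ y := by
    rw [le_iff_mul_neg]
    calc a * neg a * neg y ≤ a * neg a * neg a := mul_le_mul' (le_refl _) hny
    _ = a * (neg a * neg a) := mul_assoc _ _ _
    _ = a * neg a := by rw [idem]
    _ ≤ 0 := hana0
  have hana_na : a * neg a ≤ neg a := by
    calc a * neg a ≤ 1 * neg a := mul_le_mul' ha (le_refl _)
    _ = neg a := one_mul _
  have hana_w : a * neg a ≤ y ⊓ neg a := le_inf hana_y hana_na
  set s : α := z * y ⊓ neg a with hs
  set w : α := y ⊓ neg a with hw
  set k : α := neg (z * w) with hk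
  -- z * k ≤ ¬w
  have hzk : z * k ≤ neg w := by
    rw [le_iff_mul_neg, negneg]
    calc z * k * w = z * w * k := by ac_rfl
    _ ≤ 0 := mul_neg_le (z * w)
  have hnegw : neg w = neg y ⊔ a := by rw [hw, neg_inf, negneg]
  set T : α := s * k with hT
  -- T ≤ 0 ⊔ a
  have hT1 : T ≤ 0 ⊔ a := by
    calc T ≤ (z * y) * k := mul_le_mul' inf_le_left (le_refl k)
    _ = y * (z * k) := by ac_rfl
    _ ≤ y * (neg y ⊔ a) := mul_le_mul' (le_refl y) (hzk.trans_eq hnegw)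
    _ = y * neg y ⊔ y * a := mul_sup _ _ _
    _ ≤ 0 ⊔ a := sup_le_sup (mul_neg_le y) (by rw [mul_comm]; exact hy.le)
  -- a * s ≤ z * w
  have has : a * s ≤ z * w := by
    have h1 : a * s ≤ z * a := by
      calc a * s ≤ a * (z * y) := mul_le_mul' (le_refl a) inf_le_left
      _ = z * (a * y) := by ac_rfl
      _ = z * a := by rw [hy]
    have h2 : a * s ≤ a * neg a := mul_le_mul' (le_refl a) inf_le_right
    calc a * s = (a * s) * (a * s) := (idem _).symm
    _ ≤ (z * a) * (a * neg a) := mul_le_mul' h1 h2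
    _ = z * ((a * a) * neg a) := by ac_rfl
    _ = z * (a * neg a) := by rw [idem]
    _ ≤ z * w := mul_le_mul' (le_refl z) hana_w
  have haT : a * T ≤ 0 := by
    calc a * T = (a * s) * k := by rw [hT]; ac_rfl
    _ ≤ (z * w) * neg (z * w) := mul_le_mul' has (le_refl k)
    _ ≤ 0 := mul_neg_le _
  have h0T : (0 : α) * T ≤ 0 := by
    calc (0 : α) * T ≤ 0 * (0 ⊔ a) := mul_le_mul' (le_refl _) hT1
    _ = 0 * 0 ⊔ 0 * a := mul_sup _ _ _
    _ ≤ 0 ⊔ 0 * a := by rw [idem]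
    _ ≤ 0 ⊔ 0 := sup_le_sup (le_refl _) (by
        calc (0 : α) * a ≤ 0 * 1 := mul_le_mul' (le_refl _) ha
        _ = 0 := mul_one _)
    _ = 0 := sup_idem _
  have hT0 : T ≤ 0 := by
    calc T = T * T := (idem _).symm
    _ ≤ (0 ⊔ a) * T := mul_le_mul' hT1 (le_refl T)
    _ = 0 * T ⊔ a * T := by rw [mul_comm, mul_sup, mul_comm T 0, mul_comm T a]
    _ ≤ 0 ⊔ 0 := sup_le_sup h0T haT
    _ = 0 := sup_idem _
  -- conclude s ≤ z * w
  have : s ≤ neg (neg (z * w)) := by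
    rw [le_iff_mul_neg, negneg, ← hk]
    exact hT0
  rwa [negneg] at this

end CIdInRLAux

open CIdInRL in
theorem stmt16 {α : Type*} [CIdInRL α] (a x y : α) (ha : a ≤ 1)
    (hx : a * x = a) (hy : a * y = a) :
    (x * y) ⊓ neg a = (x ⊓ neg a) * (y ⊓ neg a) := by
  open CIdInRLAux in
  apply le_antisymm
  · have h1 : x * y ⊓ neg a ≤ x * (y ⊓ neg a) := CIdInRLAux.lemA a y ha hy x
    have h2 : (y ⊓ neg a) * x ⊓ neg a ≤ (y ⊓ neg a) * (x ⊓ neg a) :=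
      CIdInRLAux.lemA a x ha hx (y ⊓ neg a)
    calc x * y ⊓ neg a = (x * y ⊓ neg a) ⊓ neg a := by rw [inf_assoc, inf_idem]
    _ ≤ (x * (y ⊓ neg a)) ⊓ neg a := inf_le_inf_right _ h1
    _ = ((y ⊓ neg a) * x) ⊓ neg a := by rw [mul_comm]
    _ ≤ (y ⊓ neg a) * (x ⊓ neg a) := h2
    _ = (x ⊓ neg a) * (y ⊓ neg a) := mul_comm _ _
  · refine le_inf (CIdInRLAux.mul_le_mul' inf_le_left inf_le_left) ?_
    calc (x ⊓ neg a) * (y ⊓ neg a) ≤ neg a * neg a :=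
      CIdInRLAux.mul_le_mul' inf_le_right inf_le_right
    _ = neg a := CIdInRL.idem _
end
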